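/- Let p(a + tb) be considered along a segment: if p ∈ ℝ[z₁,...,zₙ] is real stable, k-homogeneous, positive on the open positive orthant, a is in the open positive orthant, and a + tb is in the open positive orthant for all t ∈ [0,1], then there exist real numbers λ₁,...,λₖ, all strictly less than 1, such that p(a + tb) = p(a)·∏ᵢ(1 - tλᵢ) for all t ∈ [0,1]. -/

import Mathlib

open Polynomial MvPolynomial in
lemma aux_homog_smul {n k : ℕ} (p : MvPolynomial (Fin n) ℝ) (hhom : p.IsHomogeneous k)
    (c : ℂ) (v : Fin n → ℂ) :
    MvPolynomial.aeval (fun i => c * v i) p = c ^ k * MvPolynomial.aeval v p := by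
  rw [MvPolynomial.aeval_def, MvPolynomial.aeval_def, MvPolynomial.eval₂_eq,
    MvPolynomial.eval₂_eq, Finset.mul_sum]
  refine Finset.sum_congr rfl fun d hd => ?_
  have hdeg : d.degree = k := by
    by_contra h
    exact (MvPolynomial.mem_support_iff.mp hd) (hhom.coeff_eq_zero h)
  have hsum : ∑ i ∈ d.support, d i = k := hdeg
  simp_rw [mul_pow]
  rw [Finset.prod_mul_distrib, Finset.prod_pow_eq_pow_sum, hsum]
  ring

lemma aux_pad_prod : ∀ (k : ℕ) (s : Multiset ℝ), s.card ≤ k → (∀ x ∈ s, x < 1) →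
    ∃ lam : Fin k → ℝ, (∀ i, lam i < 1) ∧
      ∀ t : ℝ, (∏ i, (1 - t * lam i)) = (s.map (fun x => 1 - t * x)).prod := by
  intro k
  induction k with
  | zero =>
    intro s hs _
    have : s = 0 := Multiset.card_eq_zero.mp (Nat.le_zero.mp hs)
    exact ⟨fun i => i.elim0, fun i => i.elim0, by simp [this]⟩
  | succ k ih =>
    intro s hcard hlt
    rcases Multiset.empty_or_exists_mem s with h0 | ⟨x, hx⟩
    · obtain ⟨lam, h1, h2⟩ := ih 0 (by simp) (by simp)
      refine ⟨Fin.cons 0 lam, ?_, fun t => ?_⟩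
      · intro i
        refine Fin.cases ?_ (fun j => ?_) i
        · simp
        · simpa using h1 j
      · rw [Fin.prod_univ_succ]
        simp only [Fin.cons_zero, Fin.cons_succ]
        rw [h2 t]
        simp [h0]
    · have hc : (s.erase x).card ≤ k := by
        have := Multiset.card_erase_of_mem hx
        rw [Nat.pred_eq_sub_one] at this
        have h1 : 1 ≤ Multiset.card s := Multiset.card_pos.mpr (by rintro rfl; simp at hx)
        omega
      obtain ⟨lam, h1, h2⟩ := ih (s.erase x) hc
        (fun y hy => hlt y (Multiset.mem_of_mem_erase hy))
      refine ⟨Fin.cons x lam, ?_, fun t => ?_⟩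
      · intro i
        refine Fin.cases ?_ (fun j => ?_) i
        · simpa using hlt x hx
        · simpa using h1 j
      · rw [Fin.prod_univ_succ]
        simp only [Fin.cons_zero, Fin.cons_succ]
        rw [h2 t, ← Multiset.prod_cons]
        conv_rhs => rw [← Multiset.cons_erase hx]
        rw [Multiset.map_cons]

theorem segment_factorization (n k : ℕ) (p : MvPolynomial (Fin n) ℝ)
    (hstable : ∀ z : Fin n → ℂ, (∀ i, 0 < (z i).im) → MvPolynomial.aeval z p ≠ 0)
    (hhom : p.IsHomogeneous k)
    (hpos : ∀ z : Fin n → ℝ, (∀ i, 0 < z i) → 0 < MvPolynomial.eval z p)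
    (a b : Fin n → ℝ) (ha : ∀ i, 0 < a i)
    (hab : ∀ t ∈ Set.Icc (0 : ℝ) 1, ∀ i, 0 < a i + t * b i) :
    ∃ lam : Fin k → ℝ, (∀ i, lam i < 1) ∧
      ∀ t ∈ Set.Icc (0 : ℝ) 1,
        MvPolynomial.eval (fun i => a i + t * b i) p
          = MvPolynomial.eval a p * ∏ i, (1 - t * lam i) := by
  classical
  set q : Polynomial ℂ :=
    MvPolynomial.aeval (fun i => Polynomial.C (a i : ℂ) + Polynomial.C (b i : ℂ) * Polynomial.X) p
    with hq_def
  -- evaluation of q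
  have heval : ∀ z : ℂ,
      q.eval z = MvPolynomial.aeval (fun i => (a i : ℂ) + (b i : ℂ) * z) p := by
    intro z
    have h := MvPolynomial.comp_aeval_apply ((Polynomial.aeval z).restrictScalars ℝ)
      (f := fun i => Polynomial.C (a i : ℂ) + Polynomial.C (b i : ℂ) * Polynomial.X) p
    simpa [hq_def] using h
  have hcast : ∀ x : Fin n → ℝ,
      MvPolynomial.aeval (fun i => (x i : ℂ)) p = ((MvPolynomial.eval x p : ℝ) : ℂ) := by
    intro x
    have h := MvPolynomial.comp_aeval_apply (Algebra.ofId ℝ ℂ) (f := x) p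
    rw [show (MvPolynomial.aeval x) p = MvPolynomial.eval x p from by
      rw [← MvPolynomial.coe_aeval_eq_eval]; rfl] at h
    simpa [Algebra.ofId_apply, Complex.coe_algebraMap] using h.symm
  have hrealeval : ∀ t : ℝ,
      q.eval (t : ℂ) = ((MvPolynomial.eval (fun i => a i + t * b i) p : ℝ) : ℂ) := by
    intro t
    rw [heval]
    have h1 : (fun i => (a i : ℂ) + (b i : ℂ) * (t : ℂ))
        = fun i => ((a i + t * b i : ℝ) : ℂ) := by
      funext i; push_cast; ring
    rw [h1, hcast]
  have hpa : 0 < MvPolynomial.eval a p := hpos a ha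
  have hq0 : q.eval 0 = ((MvPolynomial.eval a p : ℝ) : ℂ) := by
    have := hrealeval 0
    simpa using this
  have hq_ne : q ≠ 0 := by
    intro h
    have h2 : ((MvPolynomial.eval a p : ℝ) : ℂ) = 0 := by rw [← hq0, h]; simp
    rw [Complex.ofReal_eq_zero] at h2
    linarith
  -- conjugation
  have hconj : ∀ z : ℂ, q.eval (starRingEnd ℂ z) = starRingEnd ℂ (q.eval z) := by
    intro z
    rw [heval, heval]
    have h := MvPolynomial.comp_aeval_apply (Complex.conjAe.toAlgHom)
      (f := fun i => (a i : ℂ) + (b i : ℂ) * z) p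
    simp only [AlgEquiv.coe_toAlgHom, Complex.conjAe_coe] at h
    have hf : (fun i => (a i : ℂ) + (b i : ℂ) * starRingEnd ℂ z)
        = fun i => starRingEnd ℂ ((a i : ℂ) + (b i : ℂ) * z) := by
      funext i; simp [Complex.conj_ofReal]
    rw [hf, ← h]
  -- roots have zero imaginary part
  have him_neg : ∀ z : ℂ, z.im < 0 → q.eval z ≠ 0 := by
    intro z hz h
    have hz0 : z ≠ 0 := by
      intro h0; rw [h0] at hz; simp at hz
    rw [heval] at h
    have h1 : (fun i => (a i : ℂ) + (b i : ℂ) * z)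
        = fun i => z * ((a i : ℂ) * z⁻¹ + (b i : ℂ)) := by
      funext i; field_simp
    rw [h1, aux_homog_smul p hhom z _] at h
    rcases mul_eq_zero.mp h with h2 | h2
    · exact pow_ne_zero k hz0 h2
    · refine hstable _ (fun i => ?_) h2
      have : ((a i : ℂ) * z⁻¹ + (b i : ℂ)).im = a i * z⁻¹.im := by
        simp [Complex.add_im, Complex.mul_im]
      rw [this, Complex.inv_im]
      have hns : 0 < Complex.normSq z := Complex.normSq_pos.mpr hz0
      exact mul_pos (ha i) (div_pos (by linarith) hns)
  have him : ∀ z : ℂ, q.eval z = 0 → z.im = 0 := by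
    intro z hzero
    by_contra h
    rcases lt_or_gt_of_ne h with hlt | hgt
    · exact him_neg z hlt hzero
    · refine him_neg (starRingEnd ℂ z) (by simpa using hgt) ?_
      rw [hconj, hzero, map_zero]
  -- degree bound
  have hdeg : q.natDegree ≤ k := by
    rw [hq_def, MvPolynomial.aeval_def, MvPolynomial.eval₂_eq]
    refine Polynomial.natDegree_sum_le_of_forall_le _ _ fun d hd => ?_
    have hdd : d.degree = k := by
      by_contra h
      exact (MvPolynomial.mem_support_iff.mp hd) (hhom.coeff_eq_zero h)
    have hsum : ∑ i ∈ d.support, d i = k := hdd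
    refine le_trans (Polynomial.natDegree_mul_le) ?_
    have h1 : (algebraMap ℝ (Polynomial ℂ) (MvPolynomial.coeff d p)).natDegree = 0 := by
      rw [Polynomial.algebraMap_apply]
      exact Polynomial.natDegree_C _
    rw [h1, zero_add]
    refine le_trans (Polynomial.natDegree_prod_le _ _) ?_
    rw [← hsum]
    refine Finset.sum_le_sum fun i _ => ?_
    refine le_trans (Polynomial.natDegree_pow_le) ?_
    have : (Polynomial.C (a i : ℂ) + Polynomial.C (b i : ℂ) * Polynomial.X).natDegree ≤ 1 := by
      refine le_trans (Polynomial.natDegree_add_le _ _) ?_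
      simp only [Polynomial.natDegree_C, Nat.zero_le, max_le_iff, true_and]
      refine le_trans (Polynomial.natDegree_mul_le) ?_
      simp
    calc d i * (Polynomial.C (a i : ℂ) + Polynomial.C (b i : ℂ) * Polynomial.X).natDegree
        ≤ d i * 1 := Nat.mul_le_mul_left _ this
      _ = d i := mul_one _
  -- splitting
  have hsplits : q.Splits := IsAlgClosed.splits q
  have hcard : Multiset.card q.roots = q.natDegree :=
    (Polynomial.splits_iff_card_roots).mp hsplits
  have hfact : q = Polynomial.C q.leadingCoeff
      * (q.roots.map fun τ => Polynomial.X - Polynomial.C τ).prod :=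
    hsplits.eq_prod_roots
  have heval_fact : ∀ z : ℂ,
      q.eval z = q.leadingCoeff * (q.roots.map fun τ => z - τ).prod := by
    intro z
    conv_lhs => rw [hfact]
    rw [Polynomial.eval_mul, Polynomial.eval_C, Polynomial.eval_multiset_prod,
      Multiset.map_map]
    refine congrArg _ (congrArg Multiset.prod (Multiset.map_congr rfl fun τ _ => ?_))
    simp
  -- properties of the roots
  have hroot_props : ∀ τ ∈ q.roots, τ.im = 0 ∧ (τ.re < 0 ∨ 1 < τ.re) := by
    intro τ hτ
    have hz : q.eval τ = 0 := (Polynomial.mem_roots hq_ne).mp hτ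
    have him0 : τ.im = 0 := him τ hz
    refine ⟨him0, ?_⟩
    by_contra hcon
    push_neg at hcon
    have hmem : τ.re ∈ Set.Icc (0 : ℝ) 1 := ⟨hcon.1, hcon.2⟩
    have hτre : τ = ((τ.re : ℝ) : ℂ) := Complex.ext rfl (by simp [him0])
    have hposval : 0 < MvPolynomial.eval (fun i => a i + τ.re * b i) p :=
      hpos _ (hab τ.re hmem)
    rw [hτre, hrealeval τ.re] at hz
    exact absurd hz (by exact_mod_cast ne_of_gt hposval)
  -- the real multiset of reciprocals
  set sR : Multiset ℝ := q.roots.map (fun τ => (τ.re)⁻¹) with hsR_def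
  have hsR_card : sR.card ≤ k := by
    rw [hsR_def, Multiset.card_map, hcard]
    exact hdeg
  have hsR_lt : ∀ x ∈ sR, x < 1 := by
    intro x hxmem
    rw [hsR_def] at hxmem
    obtain ⟨τ, hτ, rfl⟩ := Multiset.mem_map.mp hxmem
    rcases (hroot_props τ hτ).2 with h | h
    · have : (τ.re)⁻¹ < 0 := inv_lt_zero.mpr h
      linarith
    · exact inv_lt_one_of_one_lt₀ h
  obtain ⟨lam, hlam_lt, hlam_prod⟩ := aux_pad_prod k sR hsR_card hsR_lt
  refine ⟨lam, hlam_lt, fun t ht => ?_⟩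
  -- final identity, proved after casting to ℂ
  have hτne : ∀ τ ∈ q.roots, τ ≠ 0 := by
    intro τ hτ h0
    rcases (hroot_props τ hτ).2 with h | h
    · rw [h0] at h; simp at h
    · rw [h0] at h; simp at h; linarith
  apply Complex.ofReal_injective
  rw [← hrealeval t]
  have hprod_cast : ((∏ i, (1 - t * lam i) : ℝ) : ℂ)
      = (q.roots.map fun τ => 1 - (t : ℂ) * τ⁻¹).prod := by
    rw [hlam_prod t]
    rw [show ((((sR.map fun x => 1 - t * x)).prod : ℝ) : ℂ)
        = ((sR.map fun x => 1 - t * x).map (Complex.ofRealHom : ℝ →+* ℂ)).prod from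
      (map_multiset_prod (Complex.ofRealHom : ℝ →+* ℂ) _)]
    rw [Multiset.map_map, hsR_def, Multiset.map_map]
    refine congrArg Multiset.prod (Multiset.map_congr rfl fun τ hτ => ?_)
    have h0 : τ = ((τ.re : ℝ) : ℂ) := Complex.ext rfl (by simp [(hroot_props τ hτ).1])
    simp only [Function.comp_apply, Complex.ofRealHom_eq_coe]
    conv_rhs => rw [h0]
    push_cast
    ring
  rw [Complex.ofReal_mul, hprod_cast, ← hq0, heval_fact 0, heval_fact t]
  rw [mul_assoc, ← Multiset.prod_map_mul]
  congr 1
  refine congrArg Multiset.prod (Multiset.map_congr rfl fun τ hτ => ?_)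
  have hτ0 : τ ≠ 0 := hτne τ hτ
  field_simp
  ring
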